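/- Let D be symmetric positive definite with zᵀDz ≤ λ_max‖z‖² for all z, S diagonal with entries in [0,1], g ∈ ℝⁿ, and p = S D S g. Then ‖p‖² ≤ λ_max · gᵀp. -/

import Mathlib

open Matrix

/-- ‖p‖² ≤ λ_max · gᵀp for p = S D S g. -/
theorem stmt_6 (n : ℕ) (D : Matrix (Fin n) (Fin n) ℝ) (hD : D.PosDef)
    (lmax : ℝ)
    (hmax : ∀ z : Fin n → ℝ, z ⬝ᵥ D.mulVec z ≤ lmax * (z ⬝ᵥ z))
    (S : Fin n → ℝ) (hS : ∀ i, 0 ≤ S i ∧ S i ≤ 1)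
    (g p : Fin n → ℝ)
    (hp : p = fun i => S i * D.mulVec (fun j => S j * g j) i) :
    p ⬝ᵥ p ≤ lmax * (g ⬝ᵥ p) := by
  rcases Nat.eq_zero_or_pos n with hn | hn
  · subst hn
    simp [dotProduct]
  set w : Fin n → ℝ := fun j => S j * g j with hw
  set q : Fin n → ℝ := D.mulVec w with hq
  -- lmax > 0
  have hlpos : 0 < lmax := by
    have hi : Nonempty (Fin n) := ⟨⟨0, hn⟩⟩
    obtain ⟨i⟩ := hi
    set z : Fin n → ℝ := Pi.single i 1 with hz
    have hz0 : z ≠ 0 := by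
      intro h
      have := congrFun h i
      simp [hz] at this
    have h1 : 0 < z ⬝ᵥ D.mulVec z := by simpa using hD.dotProduct_mulVec_pos hz0
    have h2 := hmax z
    have hzz : z ⬝ᵥ z = 1 := by
      simp [hz, dotProduct, Pi.single_apply]
    rw [hzz, mul_one] at h2
    linarith
  -- symmetry of D
  have hsym : Dᵀ = D := by
    have := hD.1
    rwa [Matrix.IsHermitian, Matrix.conjTranspose_eq_transpose_of_trivial] at this
  -- w ⬝ᵥ D q = q ⬝ᵥ q
  have hwDq : w ⬝ᵥ D.mulVec q = q ⬝ᵥ q := by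
    rw [Matrix.dotProduct_mulVec, ← Matrix.mulVec_transpose, hsym, ← hq]
  have hqDw : q ⬝ᵥ D.mulVec w = q ⬝ᵥ q := by rw [← hq]
  -- PSD at lmax • w - q
  have hpsd : 0 ≤ (lmax • w - q) ⬝ᵥ D.mulVec (lmax • w - q) := by
    have := hD.posSemidef.dotProduct_mulVec_nonneg (lmax • w - q)
    simpa using this
  have hexp : (lmax • w - q) ⬝ᵥ D.mulVec (lmax • w - q)
      = lmax * lmax * (w ⬝ᵥ q) - 2 * lmax * (q ⬝ᵥ q) + q ⬝ᵥ D.mulVec q := by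
    rw [Matrix.mulVec_sub, Matrix.mulVec_smul]
    rw [sub_dotProduct, smul_dotProduct, dotProduct_sub,
      dotProduct_sub, dotProduct_smul, dotProduct_smul, ← hq,
      hwDq, hqDw]
    simp only [smul_eq_mul]
    ring
  have hqq := hmax q
  -- q⬝q ≤ lmax * (w⬝q)
  have key : q ⬝ᵥ q ≤ lmax * (w ⬝ᵥ q) := by
    rw [hexp] at hpsd
    nlinarith [hpsd, hqq, hlpos]
  -- p⬝p ≤ q⬝q
  have hpp : p ⬝ᵥ p ≤ q ⬝ᵥ q := by
    rw [hp]
    apply Finset.sum_le_sum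
    intro i _
    have := hS i
    have hS2 : S i * S i ≤ 1 := mul_le_one₀ this.2 this.1 this.2
    simp only
    nlinarith [hS2, mul_self_nonneg (q i)]
  -- g⬝p = w⬝q
  have hgp : g ⬝ᵥ p = w ⬝ᵥ q := by
    rw [hp]
    apply Finset.sum_congr rfl
    intro i _
    simp [hw]
    ring
  rw [hgp]
  linarith
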